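/- Let n ≥ 1 and let w : Fin n → FreeGroup (Fin n) be a family of elements of the free group on n generators whose images under the abelianization homomorphism F_n → ℤ^n form a ℤ-basis of ℤ^n. Then the submonoid of F_n generated by w_1, …, w_n is a free monoid of rank n; equivalently, the unique monoid homomorphism from the free monoid on n generators to F_n sending the i-th generator to w_i is injective (and hence is an isomorphism onto the submonoid generated by the w_i). -/

import Mathlib

namespace RFAux

set_option linter.unusedSectionVars false

variable {α : Type} [DecidableEq α]

/-- Two adjacent letters are not mutually inverse. -/
def Rel (p q : α × Bool) : Prop := ¬(p.1 = q.1 ∧ p.2 = !q.2)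

lemma rel_symm {p q : α × Bool} (h : Rel p q) : Rel q p := by
  rcases p with ⟨a, b⟩; rcases q with ⟨c, d⟩
  rintro ⟨h1, h2⟩
  exact h ⟨h1.symm, by rw [h2, Bool.not_not]⟩

lemma reduced_chain' {L : List (α × Bool)} (h : FreeGroup.reduce L = L) :
    List.Chain' Rel L := by
  rw [List.Chain', List.isChain_iff_getElem]
  intro i hi
  by_contra hrel
  rw [Rel, not_not] at hrel
  have h1 : i < L.length := by omega
  have h2 : i + 1 < L.length := by omega
  have hq : L[i+1] = (L[i].1, !L[i].2) := by
    have e1 : L[i].1 = L[i+1].1 := by simpa [List.get_eq_getElem] using hrel.1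
    have e2 : L[i].2 = !L[i+1].2 := by simpa [List.get_eq_getElem] using hrel.2
    have : L[i+1].2 = !L[i].2 := by rw [e2, Bool.not_not]
    conv_lhs => rw [← Prod.mk.eta (p := L[i+1])]
    rw [← e1, this]
  have hd : L = L.take i ++ (L[i].1, L[i].2) :: (L[i].1, !L[i].2) :: L.drop (i+2) := by
    conv_lhs => rw [← List.take_append_drop i L]
    rw [List.drop_eq_getElem_cons h1, List.drop_eq_getElem_cons h2]
    simp [hq]
  exact FreeGroup.reduce.not (L₁ := L) (L₂ := L.take i) (L₃ := L.drop (i+2))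
    (x := L[i].1) (b := L[i].2) (h.trans hd)

section Construction

variable (R : List (α × Bool))

/-- Source positions of the partial bijection for letter `a`. -/
def src (a : α) (x : ℕ) : Prop :=
  R[x]? = some (a, true) ∨ (0 < x ∧ R[x-1]? = some (a, false))

/-- Target positions of the partial bijection for letter `a`. -/
def tgt (a : α) (x : ℕ) : Prop :=
  (0 < x ∧ R[x-1]? = some (a, true)) ∨ R[x]? = some (a, false)

instance (a : α) : DecidablePred (src R a) := fun _ => by unfold src; infer_instance
instance (a : α) : DecidablePred (tgt R a) := fun _ => by unfold tgt; infer_instance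

variable {R}

lemma not_adj (hR : List.Chain' Rel R) {a : α} {b : Bool} {t : ℕ}
    (h1 : R[t]? = some (a, b)) (h2 : R[t+1]? = some (a, !b)) : False := by
  obtain ⟨ht1, he1⟩ := List.getElem?_eq_some_iff.mp h1
  obtain ⟨ht2, he2⟩ := List.getElem?_eq_some_iff.mp h2
  have := List.isChain_iff_getElem.mp hR t (by omega)
  rw [Rel] at this
  rw [he1, he2] at this
  exact this ⟨rfl, by simp⟩

variable (hR : List.Chain' Rel R)

/-- The partial bijection on sources/targets for the letter `a`. -/
noncomputable def stepFun (a : α)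
    (x : {y : Fin (R.length + 1) // src R a y.val}) :
    {y : Fin (R.length + 1) // tgt R a y.val} :=
  if h : R[x.val.val]? = some (a, true) then
    ⟨⟨x.val.val + 1, by
        have := (List.getElem?_eq_some_iff.mp h).1; omega⟩,
      Or.inl ⟨Nat.succ_pos _, by simpa using h⟩⟩
  else
    ⟨⟨x.val.val - 1, by have := x.val.isLt; omega⟩,
      Or.inr (x.property.resolve_left h).2⟩

include hR in
lemma stepFun_injective (a : α) : Function.Injective (stepFun (R := R) a) := by
  rintro ⟨⟨x, hx⟩, hpx⟩ ⟨⟨y, hy⟩, hpy⟩ hxy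
  unfold stepFun at hxy
  split_ifs at hxy with h1 h2 h2 <;>
    dsimp only at hxy h1 h2 ⊢ <;>
    simp only [Subtype.ext_iff, Fin.ext_iff] at hxy
  · exact Subtype.ext (Fin.ext (show x = y by omega))
  · exfalso
    obtain ⟨hy0, hy1⟩ := hpy.resolve_left h2
    dsimp only at hy1
    have h' : y - 1 = x + 1 := by omega
    rw [h'] at hy1
    exact not_adj hR h1 hy1
  · exfalso
    obtain ⟨hx0, hx1⟩ := hpx.resolve_left h1
    dsimp only at hx1
    have h' : x - 1 = y + 1 := by omega
    rw [h'] at hx1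
    exact not_adj hR h2 hx1
  · obtain ⟨hx0, _⟩ := hpx.resolve_left h1
    obtain ⟨hy0, _⟩ := hpy.resolve_left h2
    dsimp only at hx0 hy0
    exact Subtype.ext (Fin.ext (show x = y by omega))

include hR in
lemma stepFun_surjective (a : α) : Function.Surjective (stepFun (R := R) a) := by
  rintro ⟨⟨y, hy⟩, hqy⟩
  rcases hqy with ⟨hy0, hy1⟩ | hy1
  · dsimp only at hy0 hy1
    refine ⟨⟨⟨y - 1, by omega⟩, Or.inl hy1⟩, ?_⟩
    unfold stepFun
    split_ifs with h
    · exact Subtype.ext (Fin.ext (show y - 1 + 1 = y by omega))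
    · exact absurd hy1 h
  · dsimp only at hy1
    have hylt : y < R.length := (List.getElem?_eq_some_iff.mp hy1).1
    refine ⟨⟨⟨y + 1, by omega⟩, Or.inr ⟨Nat.succ_pos _, by simpa using hy1⟩⟩, ?_⟩
    unfold stepFun
    split_ifs with h
    · exact absurd (show R[y+1]? = some (a, true) from h) (fun h' => not_adj hR hy1 h')
    · exact Subtype.ext (Fin.ext (show y + 1 - 1 = y by omega))

/-- The permutation of `Fin (R.length + 1)` associated to the letter `a`. -/
noncomputable def sigma (a : α) : Equiv.Perm (Fin (R.length + 1)) :=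
  (Equiv.ofBijective _ ⟨stepFun_injective hR a, stepFun_surjective hR a⟩).extendSubtype

lemma sigma_apply_of_true {a : α} {t : ℕ} (h : R[t]? = some (a, true)) :
    sigma hR a ⟨t, by have := (List.getElem?_eq_some_iff.mp h).1; omega⟩
      = ⟨t + 1, by have := (List.getElem?_eq_some_iff.mp h).1; omega⟩ := by
  have ht : t < R.length := (List.getElem?_eq_some_iff.mp h).1
  have hp : (fun y : Fin (R.length + 1) => src R a y.val) ⟨t, by omega⟩ := Or.inl h
  have key := Equiv.extendSubtype_apply_of_mem
    (Equiv.ofBijective _ ⟨stepFun_injective hR a, stepFun_surjective hR a⟩)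
    (⟨t, by omega⟩ : Fin (R.length + 1)) hp
  refine key.trans ?_
  show (stepFun (R := R) a ⟨⟨t, by omega⟩, hp⟩ : Fin (R.length + 1)) = _
  unfold stepFun
  split_ifs with hc
  · rfl
  · exact absurd h hc

lemma sigma_apply_of_false {a : α} {t : ℕ} (h : R[t]? = some (a, false)) :
    sigma hR a ⟨t + 1, by have := (List.getElem?_eq_some_iff.mp h).1; omega⟩
      = ⟨t, by have := (List.getElem?_eq_some_iff.mp h).1; omega⟩ := by
  have ht : t < R.length := (List.getElem?_eq_some_iff.mp h).1
  have hp : (fun y : Fin (R.length + 1) => src R a y.val) ⟨t + 1, by omega⟩ :=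
    Or.inr ⟨Nat.succ_pos _, by simpa using h⟩
  have key := Equiv.extendSubtype_apply_of_mem
    (Equiv.ofBijective _ ⟨stepFun_injective hR a, stepFun_surjective hR a⟩)
    (⟨t + 1, by omega⟩ : Fin (R.length + 1)) hp
  refine key.trans ?_
  show (stepFun (R := R) a ⟨⟨t + 1, by omega⟩, hp⟩ : Fin (R.length + 1)) = _
  unfold stepFun
  split_ifs with hc
  · exact absurd (show R[t+1]? = some (a, true) from hc) (fun h' => not_adj hR h h')
  · rfl

lemma sigma_inv_apply_of_false {a : α} {t : ℕ} (h : R[t]? = some (a, false)) :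
    (sigma hR a)⁻¹ ⟨t, by have := (List.getElem?_eq_some_iff.mp h).1; omega⟩
      = ⟨t + 1, by have := (List.getElem?_eq_some_iff.mp h).1; omega⟩ := by
  rw [Equiv.Perm.inv_def, Equiv.symm_apply_eq]
  exact (sigma_apply_of_false hR h).symm

end Construction

/-- Walking lemma: if each permutation in the list moves the appropriate point up by one,
the reversed product moves the starting point up by the length. -/
lemma walk {m : ℕ} : ∀ (l : List (Equiv.Perm (Fin m))) (x : Fin m),
    (∀ (i : ℕ) (hi : i < l.length) (y : Fin m), y.val = x.val + i →
      ((l.get ⟨i, hi⟩) y).val = x.val + i + 1) →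
    ((l.reverse.prod) x).val = x.val + l.length := by
  intro l
  induction l with
  | nil => intro x _; simp
  | cons c l' ih =>
    intro x H
    have hrev : (c :: l').reverse.prod = l'.reverse.prod * c := by
      rw [List.reverse_cons, List.prod_append, List.prod_singleton]
    rw [hrev, Equiv.Perm.mul_apply]
    have hc : (c x).val = x.val + 1 := by
      simpa using H 0 (by simp) x (by omega)
    have := ih (c x) ?_
    · rw [this, hc]
      simp [Nat.add_assoc, Nat.add_comm 1]
    · intro i hi y hy
      have := H (i + 1) (by simpa using Nat.succ_lt_succ hi) y (by omega)
      simpa [hc, Nat.add_assoc, Nat.add_comm 1] using this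

set_option maxHeartbeats 2000000 in
/-- Residual-finiteness style statement: every nontrivial element of a free group is
detected by a homomorphism to a finite permutation group. -/
theorem exists_perm_hom (g : FreeGroup α) (hg : g ≠ 1) :
    ∃ (m : ℕ) (π : FreeGroup α →* Equiv.Perm (Fin m)), π g ≠ 1 := by
  classical
  obtain ⟨R, hmk, hRred, hk1⟩ : ∃ R : List (α × Bool),
      g = FreeGroup.mk R.reverse ∧ List.Chain' Rel R ∧ 1 ≤ R.length := by
    refine ⟨g.toWord.reverse, ?_, ?_, ?_⟩
    · rw [List.reverse_reverse, FreeGroup.mk_toWord]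
    · exact List.isChain_reverse.mpr (List.IsChain.imp (fun a b h => rel_symm h)
        (reduced_chain' (FreeGroup.reduce_toWord g)))
    · have h1 : g.toWord ≠ [] := fun h => hg (FreeGroup.toWord_eq_nil_iff.mp h)
      have h2 : g.toWord.length ≠ 0 := fun h => h1 (List.length_eq_zero_iff.mp h)
      simpa using Nat.one_le_iff_ne_zero.mpr h2
  refine ⟨R.length + 1, FreeGroup.lift (fun a => sigma hRred a), ?_⟩
  intro hone
  have happ : FreeGroup.lift (fun a => sigma hRred a) g
      = ((R.map (fun x => bif x.2 then sigma hRred x.1 else (sigma hRred x.1)⁻¹)).reverse).prod := by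
    rw [hmk, FreeGroup.lift_mk, ← List.map_reverse]
  have hwalk := walk (R.map (fun x => bif x.2 then sigma hRred x.1 else (sigma hRred x.1)⁻¹))
    ⟨0, by omega⟩ ?_
  · rw [← happ, hone] at hwalk
    simp only [Equiv.Perm.one_apply, List.length_map] at hwalk
    omega
  · intro i hi y hy
    simp only [List.length_map] at hi
    have hyt : y = ⟨i, by omega⟩ := Fin.ext (by simpa using hy)
    rw [hyt]
    simp only [List.get_eq_getElem, List.getElem_map]
    rcases hri : R[i]'hi with ⟨a, b⟩
    have hsome : R[i]? = some (a, b) := by rw [List.getElem?_eq_getElem hi, hri]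
    cases b with
    | true =>
      have key := congrArg Fin.val (sigma_apply_of_true hRred hsome)
      have h2 : (i + 1 : ℕ) = 0 + i + 1 := by omega
      dsimp only
      simp only [cond_true]
      exact key.trans h2
    | false =>
      have key := congrArg Fin.val (sigma_inv_apply_of_false hRred hsome)
      have h2 : (i + 1 : ℕ) = 0 + i + 1 := by omega
      dsimp only
      simp only [cond_false]
      exact key.trans h2

end RFAux

/-- The abelianization homomorphism `F_n → ℤ^n`, sending the `i`-th free generator to the
`i`-th standard basis vector of `ℤ^n` (written multiplicatively). -/
noncomputable def freeGroupAbelianization (n : ℕ) :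
    FreeGroup (Fin n) →* Multiplicative (Fin n → ℤ) :=
  FreeGroup.lift fun i => Multiplicative.ofAdd (Pi.single i 1)


section Malcev

/-- The subgroup closure of the canonical generators of a free group is everything. -/
lemma isFreeGroup_closure_range_of (G : Type*) [Group G] [IsFreeGroup G] :
    Subgroup.closure (Set.range (IsFreeGroup.of : IsFreeGroup.Generators G → G)) = ⊤ := by
  set K := Subgroup.closure (Set.range (IsFreeGroup.of : IsFreeGroup.Generators G → G)) with hK
  set L : G →* K := IsFreeGroup.lift (fun a =>
      (⟨IsFreeGroup.of a, Subgroup.subset_closure (Set.mem_range_self a)⟩ : K)) with hL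
  have hψ : K.subtype.comp L = MonoidHom.id G := by
    apply IsFreeGroup.ext_hom
    intro a
    simp [hL, IsFreeGroup.lift_of]
  rw [eq_top_iff]
  intro x _
  have hx : ((L x : K) : G) = x := DFunLike.congr_fun hψ x
  exact hx ▸ (L x).2

/-- The key group-theoretic step: the homomorphism `F_n → F_n` determined by `w` is
injective, by Nielsen–Schreier, rank counting, and a Mal'cev-style argument using
residual finiteness of free groups. -/
theorem freeGroup_lift_injective_of_abelianization_basis
    (n : ℕ) (w : Fin n → FreeGroup (Fin n))
    (hbasis : ∃ B : Module.Basis (Fin n) ℤ (Fin n → ℤ),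
      ∀ i, B i = Multiplicative.toAdd (freeGroupAbelianization n (w i))) :
    Function.Injective (FreeGroup.lift w) := by
  classical
  obtain ⟨B, hB⟩ := hbasis
  set ab := freeGroupAbelianization n with hab
  set φ := FreeGroup.lift w with hφ
  by_contra hninj
  obtain ⟨g, hgker, hg1⟩ : ∃ g, φ g = 1 ∧ g ≠ 1 := by
    have := mt (injective_iff_map_eq_one φ).mpr hninj
    push_neg at this
    exact this
  obtain ⟨m, π, hπ⟩ := RFAux.exists_perm_hom g hg1
  set F := Equiv.Perm (Fin m) with hF
  haveI : Nontrivial F := ⟨⟨π g, 1, hπ⟩⟩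
  set H := φ.range with hH
  set ι := IsFreeGroup.Generators H with hι
  set v : ι → (Fin n → ℤ) := fun a =>
    Multiplicative.toAdd (ab ((IsFreeGroup.of a : H) : FreeGroup (Fin n))) with hv
  have hvmem : ∀ h : H, Multiplicative.toAdd (ab ((h : FreeGroup (Fin n))))
      ∈ Submodule.span ℤ (Set.range v) := by
    intro h
    have hmem : h ∈ Subgroup.closure (Set.range (IsFreeGroup.of : ι → H)) := by
      rw [isFreeGroup_closure_range_of]; exact Subgroup.mem_top h
    refine Subgroup.closure_induction ?_ ?_ ?_ ?_ hmem
    · rintro x ⟨a, rfl⟩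
      exact Submodule.subset_span ⟨a, rfl⟩
    · simp only [OneMemClass.coe_one, map_one, toAdd_one]
      exact Submodule.zero_mem _
    · intro x y _ _ hx hy
      simp only [Subgroup.coe_mul, map_mul, toAdd_mul]
      exact Submodule.add_mem _ hx hy
    · intro x _ hx
      simp only [Subgroup.coe_inv, map_inv, toAdd_inv]
      exact Submodule.neg_mem _ hx
  have hspan : Submodule.span ℤ (Set.range v) = ⊤ := by
    rw [eq_top_iff, ← B.span_eq]
    rw [Submodule.span_le]
    rintro _ ⟨j, rfl⟩
    rw [hB j]
    exact hvmem ⟨w j, ⟨FreeGroup.of j, FreeGroup.lift_apply_of⟩⟩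
  have hcard : (n : Cardinal) ≤ Cardinal.mk ι := by
    have h1 := B.le_span hspan
    rw [Cardinal.mk_range_eq _ B.injective, Cardinal.mk_fin] at h1
    exact h1.trans Cardinal.mk_range_le
  set c : (H →* F) → (FreeGroup (Fin n) →* F) := fun ψ => ψ.comp φ.rangeRestrict with hc
  have hcinj : Function.Injective c := fun ψ1 ψ2 h =>
    (MonoidHom.cancel_right φ.rangeRestrict_surjective).mp h
  haveI : Finite (Fin n → F) := inferInstance
  haveI : Finite (FreeGroup (Fin n) →* F) := Finite.of_equiv _ FreeGroup.lift
  haveI : Finite (H →* F) := Finite.of_injective c hcinj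
  haveI : Finite (ι → F) := Finite.of_equiv _ (IsFreeGroup.lift (G := H) (H := F)).symm
  haveI : Finite ι := by
    by_contra hinf
    rw [not_finite_iff_infinite] at hinf
    exact not_finite (ι → F)
  haveI : Fintype ι := Fintype.ofFinite ι
  haveI : Fintype F := inferInstance
  haveI : Fintype (FreeGroup (Fin n) →* F) := Fintype.ofFinite _
  haveI : Fintype (H →* F) := Fintype.ofFinite _
  have hnι : n ≤ Fintype.card ι := by
    rw [Cardinal.mk_fintype ι] at hcard
    exact_mod_cast hcard
  have hcards : Fintype.card (FreeGroup (Fin n) →* F) ≤ Fintype.card (H →* F) := by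
    calc Fintype.card (FreeGroup (Fin n) →* F)
        = Fintype.card (Fin n → F) :=
          Fintype.card_congr (FreeGroup.lift (α := Fin n) (β := F)).symm
      _ = Fintype.card F ^ n := by rw [Fintype.card_fun, Fintype.card_fin]
      _ ≤ Fintype.card F ^ Fintype.card ι := Nat.pow_le_pow_right Fintype.card_pos hnι
      _ = Fintype.card (ι → F) := (Fintype.card_fun).symm
      _ = Fintype.card (H →* F) :=
          Fintype.card_congr (IsFreeGroup.lift (G := H) (H := F))
  have hcbij : Function.Bijective c := by
    rw [Fintype.bijective_iff_injective_and_card]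
    exact ⟨hcinj, le_antisymm (Fintype.card_le_of_injective c hcinj) hcards⟩
  obtain ⟨ψ, hψ⟩ := hcbij.2 π
  have hπg : π g = 1 := by
    rw [← hψ]
    have h1 : φ.rangeRestrict g = 1 := by
      ext
      rw [MonoidHom.coe_rangeRestrict, hgker, OneMemClass.coe_one]
    show ψ (φ.rangeRestrict g) = 1
    rw [h1, map_one]
  exact hπ hπg

end Malcev


/-- Lemma 2.2.6: if `w : Fin n → FreeGroup (Fin n)` is a family whose images under the
abelianization homomorphism `F_n → ℤ^n` form a ℤ-basis of `ℤ^n`, then the submonoid of `F_n`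
generated by the `w i` is a free monoid of rank `n`: the unique monoid homomorphism
`FreeMonoid (Fin n) →* FreeGroup (Fin n)` sending the `i`-th generator to `w i` is injective. -/
theorem freeMonoid_lift_injective_of_abelianization_basis
    (n : ℕ) (hn : 1 ≤ n) (w : Fin n → FreeGroup (Fin n))
    (hbasis : ∃ B : Module.Basis (Fin n) ℤ (Fin n → ℤ),
      ∀ i, B i = Multiplicative.toAdd (freeGroupAbelianization n (w i))) :
    Function.Injective (FreeMonoid.lift w) := by
  classical
  have hφ : Function.Injective (FreeGroup.lift w) :=
    freeGroup_lift_injective_of_abelianization_basis n w hbasis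
  set inc : FreeMonoid (Fin n) →* FreeGroup (Fin n) := FreeMonoid.lift FreeGroup.of with hinc
  have hcomp : (FreeGroup.lift w).comp inc = FreeMonoid.lift w := by
    apply FreeMonoid.hom_eq
    intro i
    simp [hinc]
  have hlist : ∀ L : List (Fin n),
      (L.map FreeGroup.of).prod = FreeGroup.mk (L.map (fun a => (a, true))) := by
    intro L
    induction L with
    | nil => simp [FreeGroup.one_eq_mk]
    | cons a L ih =>
      rw [List.map_cons, List.prod_cons, ih, List.map_cons]
      rw [show FreeGroup.of a = FreeGroup.mk [(a, true)] from rfl, FreeGroup.mul_mk]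
      rfl
  have hred : ∀ L : List (Fin n),
      FreeGroup.reduce (L.map (fun a => (a, true))) = L.map (fun a => (a, true)) := by
    intro L
    induction L with
    | nil => rfl
    | cons a L ih =>
      rw [List.map_cons, FreeGroup.reduce.cons, ih]
      cases L with
      | nil => rfl
      | cons b L' => simp
  have hincinj : Function.Injective inc := by
    intro x y hxy
    rw [hinc, FreeMonoid.lift_apply, FreeMonoid.lift_apply, hlist, hlist] at hxy
    have h2 := congrArg FreeGroup.toWord hxy
    rw [FreeGroup.toWord_mk, FreeGroup.toWord_mk, hred, hred] at h2
    have h3 : x.toList = y.toList :=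
      List.map_injective_iff.mpr (fun a b hab => (Prod.mk.injEq _ _ _ _).mp hab |>.1) h2
    exact FreeMonoid.toList.injective h3
  have : Function.Injective ((FreeGroup.lift w).comp inc) := by
    rw [MonoidHom.coe_comp]
    exact hφ.comp hincinj
  rwa [hcomp] at this
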